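/- If the filter coefficients satisfy Σ_ℓ h_ℓ² = 1 and the shifted orthogonality conditions Σ_ℓ h_ℓ h_{ℓ+2k} = 0 for all k ≠ 0, then the kernel matrix W built from them is unitary. -/

import Mathlib

open Matrix

/-- The mirrored filter `g_ℓ = (−1)^ℓ h_{M−1−ℓ}`. -/
noncomputable def gfilter (M : ℕ) (h : ℤ → ℝ) : ℤ → ℝ :=
  fun ℓ => (-1 : ℝ) ^ ℓ * h ((M : ℤ) - 1 - ℓ)

/-- The wavelet kernel matrix `W` on `N = 2^n` dimensions: rows
`H_{ic} = h_{(c−2i) mod N}` for `0 ≤ i < N/2` and `G_{ic} = g_{(c−2i) mod N}` for the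
remaining rows (`i = row − N/2`), with `g_ℓ = (−1)^ℓ h_{M−1−ℓ}`. -/
noncomputable def Wker (n M : ℕ) (h : ℤ → ℝ) : Matrix (Fin (2^n)) (Fin (2^n)) ℂ :=
  fun r c =>
    if (r : ℕ) < 2^n / 2 then
      ((h (((c : ℤ) - 2 * ((r : ℕ) : ℤ)) % (2^n : ℤ))) : ℂ)
    else
      ((gfilter M h (((c : ℤ) - 2 * ((((r : ℕ) - 2^n / 2 : ℕ)) : ℤ)) % (2^n : ℤ))) : ℂ)

lemma shift_sum (N : ℕ) (hN : 0 < N) (F : ℤ → ℝ) (s : ℤ) :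
    ∑ c ∈ Finset.range N, F (((c:ℤ) - s) % (N:ℤ)) = ∑ a ∈ Finset.range N, F (a:ℤ) := by
  have hNZ : (0:ℤ) < (N:ℤ) := by exact_mod_cast hN
  refine Finset.sum_nbij' (i := fun c => (((c:ℤ) - s) % (N:ℤ)).toNat)
    (j := fun a => (((a:ℤ) + s) % (N:ℤ)).toNat) ?_ ?_ ?_ ?_ ?_
  · intro c hc
    simp only [Finset.mem_range] at *
    have h1 := Int.emod_nonneg ((c:ℤ) - s) (by positivity : ((N:ℤ)) ≠ 0)
    have h2 := Int.emod_lt_of_pos ((c:ℤ) - s) hNZ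
    omega
  · intro a ha
    simp only [Finset.mem_range] at *
    have h1 := Int.emod_nonneg ((a:ℤ) + s) (by positivity : ((N:ℤ)) ≠ 0)
    have h2 := Int.emod_lt_of_pos ((a:ℤ) + s) hNZ
    omega
  · intro c hc
    simp only [Finset.mem_range] at hc
    have h1 := Int.emod_nonneg ((c:ℤ) - s) (by positivity : ((N:ℤ)) ≠ 0)
    have key : ((((((c:ℤ) - s) % (N:ℤ)).toNat : ℤ)) + s) % (N:ℤ) = (c:ℤ) := by
      rw [Int.toNat_of_nonneg h1, Int.add_emod, Int.emod_emod_of_dvd _ dvd_rfl,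
        ← Int.add_emod, sub_add_cancel]
      exact Int.emod_eq_of_lt (by positivity) (by exact_mod_cast hc)
    show ((((((c:ℤ) - s) % (N:ℤ)).toNat : ℤ) + s) % (N:ℤ)).toNat = c
    omega
  · intro a ha
    simp only [Finset.mem_range] at ha
    have h1 := Int.emod_nonneg ((a:ℤ) + s) (by positivity : ((N:ℤ)) ≠ 0)
    have key : ((((((a:ℤ) + s) % (N:ℤ)).toNat : ℤ)) - s) % (N:ℤ) = (a:ℤ) := by
      rw [Int.toNat_of_nonneg h1, Int.sub_emod, Int.emod_emod_of_dvd _ dvd_rfl,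
        ← Int.sub_emod, add_sub_cancel_right]
      exact Int.emod_eq_of_lt (by positivity) (by exact_mod_cast ha)
    show ((((((a:ℤ) + s) % (N:ℤ)).toNat : ℤ) - s) % (N:ℤ)).toNat = a
    omega
  · intro c hc
    congr 1
    have h1 := Int.emod_nonneg ((c:ℤ) - s) (by positivity : ((N:ℤ)) ≠ 0)
    rw [Int.toNat_of_nonneg h1]

lemma localize (M N : ℕ) (hMN : 2 * M ≤ N) (f g : ℤ → ℝ)
    (hf : ∀ k : ℤ, (k < 0 ∨ (M : ℤ) ≤ k) → f k = 0)
    (hg : ∀ k : ℤ, (k < 0 ∨ (M : ℤ) ≤ k) → g k = 0)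
    (e e' : ℤ) (hmod : ((N:ℤ)) ∣ (e - e')) (h1 : -(M:ℤ) < e') (h2 : e' < M) :
    ∑ a ∈ Finset.range N, f a * g (((a:ℤ) + e) % (N:ℤ)) =
      ∑ a ∈ Finset.range M, f a * g ((a:ℤ) + e') := by
  rw [← Finset.sum_subset (Finset.range_subset_range.2 (by omega : M ≤ N))]
  · apply Finset.sum_congr rfl
    intro a ha
    simp only [Finset.mem_range] at ha
    have haM : (a : ℤ) < M := by exact_mod_cast ha
    have ha0 : (0:ℤ) ≤ a := Int.natCast_nonneg a
    obtain ⟨k, hk⟩ := hmod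
    have hae : (a:ℤ) + e = ((a:ℤ) + e') + (N:ℤ) * k := by linarith
    rw [hae, Int.add_mul_emod_self_left]
    by_cases hc : 0 ≤ (a:ℤ) + e'
    · rw [Int.emod_eq_of_lt hc (by omega)]
    · push_neg at hc
      have hN' : (2*(M:ℤ)) ≤ N := by exact_mod_cast hMN
      have hx : ((a:ℤ) + e') % (N:ℤ) = (a:ℤ) + e' + N := by
        have h4 : ((a:ℤ) + e' + (N:ℤ)*1) % (N:ℤ) = ((a:ℤ) + e') % (N:ℤ) :=
          Int.add_mul_emod_self_left ..

        rw [mul_one] at h4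
        rw [← h4]
        exact Int.emod_eq_of_lt (by omega) (by omega)
      rw [hx, hg _ (by omega), hg _ (by omega)]
  · intro a _ ha
    simp only [Finset.mem_range, not_lt] at ha
    rw [hf _ (by right; exact_mod_cast ha), zero_mul]

lemma norep (M N : ℕ) (f g : ℤ → ℝ)
    (hf : ∀ k : ℤ, (k < 0 ∨ (M : ℤ) ≤ k) → f k = 0)
    (hg : ∀ k : ℤ, (k < 0 ∨ (M : ℤ) ≤ k) → g k = 0)
    (e : ℤ) (hno : ∀ e' : ℤ, ((N:ℤ)) ∣ (e - e') → ¬(-(M:ℤ) < e' ∧ e' < M)) :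
    ∑ a ∈ Finset.range N, f a * g (((a:ℤ) + e) % (N:ℤ)) = 0 := by
  apply Finset.sum_eq_zero
  intro a _
  by_cases hfa : f (a:ℤ) = 0
  · rw [hfa, zero_mul]
  have ha0 : (0:ℤ) ≤ a ∧ (a:ℤ) < M := by
    by_contra hcon
    exact hfa (hf _ (by omega))
  by_cases hga : g (((a:ℤ) + e) % (N:ℤ)) = 0
  · rw [hga, mul_zero]
  have hg0 : (0:ℤ) ≤ ((a:ℤ) + e) % (N:ℤ) ∧ ((a:ℤ) + e) % (N:ℤ) < M := by
    by_contra hcon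
    exact hga (hg _ (by omega))
  exfalso
  apply hno (((a:ℤ) + e) % (N:ℤ) - (a:ℤ))
  · have : ((N:ℤ)) ∣ ((a:ℤ) + e) - (((a:ℤ) + e) % (N:ℤ)) := Int.dvd_self_sub_of_emod_eq rfl
    have h2 : e - ((((a:ℤ) + e) % (N:ℤ)) - (a:ℤ)) = ((a:ℤ) + e) - (((a:ℤ) + e) % (N:ℤ)) := by ring
    rw [h2]; exact this
  · constructor <;> omega

lemma sign_eq (a b : ℤ) (hab : Even (a - b)) : (-1:ℝ)^a = (-1:ℝ)^b := by
  have h1 : a = b + (a - b) := by ring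
  rw [h1, zpow_add₀ (by norm_num : (-1:ℝ) ≠ 0), hab.neg_one_zpow, mul_one]

lemma sum_range_int (M : ℕ) (F : ℤ → ℝ) :
    ∑ ℓ ∈ Finset.range M, F (ℓ:ℤ) = ∑ ℓ ∈ Finset.Ico (0:ℤ) (M:ℤ), F ℓ := by
  refine Finset.sum_nbij' (i := fun n => (n:ℤ)) (j := Int.toNat) ?_ ?_ ?_ ?_ ?_ <;>
    intro a ha <;>
    simp only [Finset.mem_range, Finset.mem_Ico] at * <;>
    first | rfl | omega

lemma gsupp (M : ℕ) (h : ℤ → ℝ)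
    (hsupp : ∀ k : ℤ, (k < 0 ∨ (M : ℤ) ≤ k) → h k = 0) :
    ∀ k : ℤ, (k < 0 ∨ (M : ℤ) ≤ k) → gfilter M h k = 0 := by
  intro k hk
  unfold gfilter
  rw [hsupp ((M:ℤ) - 1 - k) (by omega), mul_zero]

lemma cross_hg (M K : ℕ) (hM : M = 2*K) (h : ℤ → ℝ)
    (hsupp : ∀ k : ℤ, (k < 0 ∨ (M : ℤ) ≤ k) → h k = 0)
    (t : ℤ) (ht : Even t) :
    ∑ ℓ ∈ Finset.range M, h ℓ * gfilter M h ((ℓ:ℤ) + t) = 0 := by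
  rw [sum_range_int M (fun ℓ => h ℓ * gfilter M h (ℓ + t))]
  rw [Finset.sum_subset (Finset.Ico_subset_Ico (min_le_left 0 (-t))
      (le_max_left (M:ℤ) ((M:ℤ)-t)))]
  · refine Finset.sum_involution (fun ℓ _ => (M:ℤ) - 1 - t - ℓ) ?_ ?_ ?_ ?_
    · intro ℓ _
      unfold gfilter
      have e1 : (M:ℤ) - 1 - (ℓ + t) = (M:ℤ) - 1 - t - ℓ := by ring
      have e2 : (M:ℤ) - 1 - ((M:ℤ) - 1 - t - ℓ + t) = ℓ := by ring
      rw [e1, e2]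
      have s1 : (-1:ℝ)^(ℓ + t) = (-1:ℝ)^ℓ := sign_eq _ _ (by simpa using ht)
      have s2 : (-1:ℝ)^((M:ℤ) - 1 - t - ℓ + t) = -((-1:ℝ)^ℓ) := by
        rw [sign_eq ((M:ℤ) - 1 - t - ℓ + t) (ℓ + 1) (by
          obtain ⟨k, hk⟩ := ht
          exact ⟨K - 1 - ℓ, by omega⟩)]
        rw [zpow_add₀ (by norm_num : (-1:ℝ) ≠ 0), zpow_one]
        ring
      rw [s1, s2]; ring
    · intro ℓ hℓ hne hfix
      have hfix' : (M:ℤ) - 1 - t - ℓ = ℓ := hfix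
      obtain ⟨k, hk⟩ := ht
      omega
    · intro ℓ hℓ
      simp only [Finset.mem_Ico] at hℓ ⊢
      omega
    · intro ℓ _
      ring
  · intro ℓ hℓ hℓ2
    simp only [Finset.mem_Ico] at *
    rw [hsupp ℓ (by omega), zero_mul]

lemma cross_gh (M K : ℕ) (hM : M = 2*K) (h : ℤ → ℝ)
    (hsupp : ∀ k : ℤ, (k < 0 ∨ (M : ℤ) ≤ k) → h k = 0)
    (t : ℤ) (ht : Even t) :
    ∑ ℓ ∈ Finset.range M, gfilter M h ℓ * h ((ℓ:ℤ) + t) = 0 := by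
  rw [sum_range_int M (fun ℓ => gfilter M h ℓ * h (ℓ + t))]
  rw [Finset.sum_subset (Finset.Ico_subset_Ico (min_le_left 0 (-t))
      (le_max_left (M:ℤ) ((M:ℤ)-t)))]
  · refine Finset.sum_involution (fun ℓ _ => (M:ℤ) - 1 - t - ℓ) ?_ ?_ ?_ ?_
    · intro ℓ _
      unfold gfilter
      have e1 : (M:ℤ) - 1 - ((M:ℤ) - 1 - t - ℓ) = ℓ + t := by ring
      have e2 : (M:ℤ) - 1 - t - ℓ + t = (M:ℤ) - 1 - ℓ := by ring
      rw [e1, e2]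
      have s2 : (-1:ℝ)^((M:ℤ) - 1 - t - ℓ) = -((-1:ℝ)^ℓ) := by
        rw [sign_eq ((M:ℤ) - 1 - t - ℓ) (ℓ + 1) (by
          obtain ⟨k, hk⟩ := ht
          exact ⟨K - 1 - k - ℓ, by omega⟩)]
        rw [zpow_add₀ (by norm_num : (-1:ℝ) ≠ 0), zpow_one]
        ring
      rw [s2]; ring
    · intro ℓ hℓ hne hfix
      have hfix' : (M:ℤ) - 1 - t - ℓ = ℓ := hfix
      obtain ⟨k, hk⟩ := ht
      omega
    · intro ℓ hℓ
      simp only [Finset.mem_Ico] at hℓ ⊢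
      omega
    · intro ℓ _
      ring
  · intro ℓ hℓ hℓ2
    simp only [Finset.mem_Ico] at *
    rw [gsupp M h hsupp ℓ (by omega), zero_mul]

lemma gg_sum (M : ℕ) (h : ℤ → ℝ) (e' : ℤ) (he : Even e') :
    ∑ ℓ ∈ Finset.range M, gfilter M h ℓ * gfilter M h ((ℓ:ℤ) + e') =
      ∑ ℓ ∈ Finset.range M, h ℓ * h ((ℓ:ℤ) - e') := by
  rw [← Finset.sum_range_reflect (fun j => h (j:ℤ) * h ((j:ℤ) - e')) M]
  apply Finset.sum_congr rfl
  intro a ha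
  simp only [Finset.mem_range] at ha
  have hc : ((M - 1 - a : ℕ) : ℤ) = (M:ℤ) - 1 - a := by omega
  rw [hc]
  unfold gfilter
  have s1 : (-1:ℝ)^((a:ℤ) + e') = (-1:ℝ)^(a:ℤ) := sign_eq _ _ (by simpa using he)
  have s2 : (-1:ℝ)^(a:ℤ) * (-1:ℝ)^(a:ℤ) = 1 := by
    rw [← zpow_add₀ (by norm_num : (-1:ℝ) ≠ 0)]
    exact Even.neg_one_zpow ⟨a, rfl⟩
  have e2 : (M:ℤ) - 1 - ((a:ℤ) + e') = (M:ℤ) - 1 - a - e' := by ring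
  rw [s1, e2, mul_mul_mul_comm, s2, one_mul]

lemma dot_shift (N : ℕ) (hN : 0 < N) (f g : ℤ → ℝ) (i j : ℕ) :
    ∑ c ∈ Finset.range N, f (((c:ℤ) - 2*(i:ℤ)) % (N:ℤ)) * g (((c:ℤ) - 2*(j:ℤ)) % (N:ℤ))
      = ∑ a ∈ Finset.range N, f a * g (((a:ℤ) + (2*(i:ℤ) - 2*(j:ℤ))) % (N:ℤ)) := by
  have key : ∀ c : ℕ, ((c:ℤ) - 2*(j:ℤ)) % (N:ℤ)
      = ((((c:ℤ) - 2*(i:ℤ)) % (N:ℤ)) + (2*(i:ℤ) - 2*(j:ℤ))) % (N:ℤ) := by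
    intro c
    rw [Int.add_emod (((c:ℤ) - 2*(i:ℤ)) % (N:ℤ)), Int.emod_emod_of_dvd _ dvd_rfl,
      ← Int.add_emod]
    congr 1
    ring
  simp_rw [key]
  exact shift_sum N hN (fun a => f a * g ((a + (2*(i:ℤ) - 2*(j:ℤ))) % (N:ℤ))) (2*(i:ℤ))

lemma even_rep (n : ℕ) (hn : 1 ≤ n) (e e' : ℤ) (he : Even e)
    (hd : ((2^n : ℕ) : ℤ) ∣ (e - e')) : Even e' := by
  obtain ⟨k, hk⟩ := hd
  obtain ⟨m, hm⟩ := he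
  have hpow : ((2^n : ℕ) : ℤ) = 2 * 2^(n-1) := by
    push_cast
    rw [← pow_succ']
    congr 1
    omega
  rw [hpow, mul_assoc] at hk
  exact ⟨m - 2^(n-1) * k, by omega⟩

lemma rep_ne_zero (n : ℕ) (N2 : ℕ) (hN2 : 2^n = 2 * N2) (i j : ℕ)
    (hi : i < N2) (hj : j < N2) (hij : i ≠ j) (e' : ℤ)
    (hd : ((2^n : ℕ) : ℤ) ∣ (2*(i:ℤ) - 2*(j:ℤ) - e')) (h1 : e' = 0) : False := by
  rw [h1, sub_zero] at hd
  have : 2*(i:ℤ) - 2*(j:ℤ) = 0 :=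
    Int.eq_zero_of_dvd_of_natAbs_lt_natAbs hd (by omega)
  omega

/-- generic vanishing principle -/
lemma main_dot (n M K : ℕ) (hn : 1 ≤ n) (hK : 0 < K) (hM : M = 2*K)
    (hNM : 2 * M ≤ 2^n) (f g : ℤ → ℝ)
    (hf : ∀ k : ℤ, (k < 0 ∨ (M : ℤ) ≤ k) → f k = 0)
    (hg : ∀ k : ℤ, (k < 0 ∨ (M : ℤ) ≤ k) → g k = 0)
    (e : ℤ)
    (hzero : ∀ e' : ℤ, -(M:ℤ) < e' → e' < M → ((2^n : ℕ) : ℤ) ∣ (e - e') →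
      ∑ a ∈ Finset.range M, f a * g ((a:ℤ) + e') = 0) :
    ∑ a ∈ Finset.range (2^n), f a * g (((a:ℤ) + e) % ((2^n : ℕ) : ℤ)) = 0 := by
  by_cases hrep : ∃ e' : ℤ, ((2^n : ℕ) : ℤ) ∣ (e - e') ∧ -(M:ℤ) < e' ∧ e' < (M:ℤ)
  · obtain ⟨e', hd, h1, h2⟩ := hrep
    rw [localize M (2^n) hNM f g hf hg e e' hd h1 h2]
    exact hzero e' h1 h2 hd
  · push_neg at hrep
    apply norep M (2^n) f g hf hg e
    intro e' hd
    intro ⟨h1, h2⟩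
    exact absurd (hrep e' hd h1) (not_le.2 h2)

lemma dotHH (n M K : ℕ) (hn : 1 ≤ n) (hK : 0 < K) (hM : M = 2*K)
    (hNM : 2 * M ≤ 2^n) (h : ℤ → ℝ)
    (hsupp : ∀ k : ℤ, (k < 0 ∨ (M : ℤ) ≤ k) → h k = 0)
    (hnorm : ∑ ℓ ∈ Finset.range M, (h ℓ)^2 = 1)
    (horth : ∀ k : ℤ, k ≠ 0 → ∑ ℓ ∈ Finset.range M, h ℓ * h (ℓ + 2 * k) = 0)
    (N2 : ℕ) (hN2 : 2^n = 2 * N2) (i j : ℕ) (hi : i < N2) (hj : j < N2) :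
    ∑ c ∈ Finset.range (2^n),
        h (((c:ℤ) - 2*(i:ℤ)) % ((2^n : ℕ):ℤ)) * h (((c:ℤ) - 2*(j:ℤ)) % ((2^n : ℕ):ℤ))
      = if i = j then 1 else 0 := by
  have hNpos : 0 < 2^n := Nat.pow_pos (by norm_num)
  rw [dot_shift (2^n) hNpos h h i j]
  by_cases hij : i = j
  · subst hij
    rw [if_pos rfl, show (2*(i:ℤ) - 2*(i:ℤ)) = 0 by ring]
    rw [localize M (2^n) hNM h h hsupp hsupp 0 0 (by simp) (by omega) (by omega)]
    rw [← hnorm]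
    exact Finset.sum_congr rfl fun a _ => by rw [add_zero, sq]
  · rw [if_neg hij]
    apply main_dot n M K hn hK hM hNM h h hsupp hsupp
    intro e' h1 h2 hd
    obtain ⟨k, hk⟩ := even_rep n hn _ e' ⟨(i:ℤ) - j, by ring⟩ hd
    have hk0 : k ≠ 0 := by
      intro hk0
      exact rep_ne_zero n N2 hN2 i j hi hj hij e' hd (by omega)
    rw [show e' = 2 * k by omega]
    exact horth k hk0

lemma dotGG (n M K : ℕ) (hn : 1 ≤ n) (hK : 0 < K) (hM : M = 2*K)
    (hNM : 2 * M ≤ 2^n) (h : ℤ → ℝ)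
    (hsupp : ∀ k : ℤ, (k < 0 ∨ (M : ℤ) ≤ k) → h k = 0)
    (hnorm : ∑ ℓ ∈ Finset.range M, (h ℓ)^2 = 1)
    (horth : ∀ k : ℤ, k ≠ 0 → ∑ ℓ ∈ Finset.range M, h ℓ * h (ℓ + 2 * k) = 0)
    (N2 : ℕ) (hN2 : 2^n = 2 * N2) (i j : ℕ) (hi : i < N2) (hj : j < N2) :
    ∑ c ∈ Finset.range (2^n),
        gfilter M h (((c:ℤ) - 2*(i:ℤ)) % ((2^n : ℕ):ℤ)) *
          gfilter M h (((c:ℤ) - 2*(j:ℤ)) % ((2^n : ℕ):ℤ))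
      = if i = j then 1 else 0 := by
  have hNpos : 0 < 2^n := Nat.pow_pos (by norm_num)
  have hgs := gsupp M h hsupp
  rw [dot_shift (2^n) hNpos _ _ i j]
  by_cases hij : i = j
  · subst hij
    rw [if_pos rfl, show (2*(i:ℤ) - 2*(i:ℤ)) = 0 by ring]
    rw [localize M (2^n) hNM _ _ hgs hgs 0 0 (by simp) (by omega) (by omega)]
    rw [gg_sum M h 0 Even.zero, ← hnorm]
    exact Finset.sum_congr rfl fun a _ => by rw [sub_zero, sq]
  · rw [if_neg hij]
    apply main_dot n M K hn hK hM hNM _ _ hgs hgs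
    intro e' h1 h2 hd
    obtain ⟨k, hk⟩ := even_rep n hn _ e' ⟨(i:ℤ) - j, by ring⟩ hd
    have hk0 : k ≠ 0 := by
      intro hk0
      exact rep_ne_zero n N2 hN2 i j hi hj hij e' hd (by omega)
    rw [gg_sum M h e' ⟨k, hk⟩]
    have : ∀ a : ℕ, (a:ℤ) - e' = (a:ℤ) + 2 * (-k) := by intro a; omega
    simp_rw [this]
    exact horth (-k) (by omega)

lemma dotHG (n M K : ℕ) (hn : 1 ≤ n) (hK : 0 < K) (hM : M = 2*K)
    (hNM : 2 * M ≤ 2^n) (h : ℤ → ℝ)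
    (hsupp : ∀ k : ℤ, (k < 0 ∨ (M : ℤ) ≤ k) → h k = 0)
    (i j : ℕ) :
    ∑ c ∈ Finset.range (2^n),
        h (((c:ℤ) - 2*(i:ℤ)) % ((2^n : ℕ):ℤ)) *
          gfilter M h (((c:ℤ) - 2*(j:ℤ)) % ((2^n : ℕ):ℤ)) = 0 := by
  have hNpos : 0 < 2^n := Nat.pow_pos (by norm_num)
  rw [dot_shift (2^n) hNpos _ _ i j]
  apply main_dot n M K hn hK hM hNM _ _ hsupp (gsupp M h hsupp)
  intro e' h1 h2 hd
  exact cross_hg M K hM h hsupp e' (even_rep n hn _ e' ⟨(i:ℤ) - j, by ring⟩ hd)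

lemma dotGH (n M K : ℕ) (hn : 1 ≤ n) (hK : 0 < K) (hM : M = 2*K)
    (hNM : 2 * M ≤ 2^n) (h : ℤ → ℝ)
    (hsupp : ∀ k : ℤ, (k < 0 ∨ (M : ℤ) ≤ k) → h k = 0)
    (i j : ℕ) :
    ∑ c ∈ Finset.range (2^n),
        gfilter M h (((c:ℤ) - 2*(i:ℤ)) % ((2^n : ℕ):ℤ)) *
          h (((c:ℤ) - 2*(j:ℤ)) % ((2^n : ℕ):ℤ)) = 0 := by
  have hNpos : 0 < 2^n := Nat.pow_pos (by norm_num)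
  rw [dot_shift (2^n) hNpos _ _ i j]
  apply main_dot n M K hn hK hM hNM _ _ (gsupp M h hsupp) hsupp
  intro e' h1 h2 hd
  exact cross_gh M K hM h hsupp e' (even_rep n hn _ e' ⟨(i:ℤ) - j, by ring⟩ hd)

/-- if the filter coefficients satisfy `Σ_ℓ h_ℓ² = 1` and the shifted
orthogonality conditions `Σ_ℓ h_ℓ h_{ℓ+2k} = 0` for all `k ≠ 0`, then the kernel
matrix `W` built from them is unitary.  Here `M = 2K`, `N = 2^n ≥ 2M`, and
`h : ℤ → ℝ` vanishes outside `[0, M−1]`. -/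
theorem Wker_unitary (n M K : ℕ) (hn : 1 ≤ n) (hK : 0 < K) (hM : M = 2 * K)
    (hNM : 2 * M ≤ 2^n) (h : ℤ → ℝ)
    (hsupp : ∀ k : ℤ, (k < 0 ∨ (M : ℤ) ≤ k) → h k = 0)
    (hnorm : ∑ ℓ ∈ Finset.range M, (h ℓ)^2 = 1)
    (horth : ∀ k : ℤ, k ≠ 0 → ∑ ℓ ∈ Finset.range M, h ℓ * h (ℓ + 2 * k) = 0) :
    Wker n M h ∈ Matrix.unitaryGroup (Fin (2^n)) ℂ := by
  have hN2 : 2^n = 2 * (2^n / 2) := by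
    have : 2^n = 2^(n-1) * 2 := by rw [← pow_succ]; congr 1; omega
    omega
  set N2 : ℕ := 2^n / 2 with hN2def
  have hcast : ((2:ℤ)^n) = ((2^n : ℕ) : ℤ) := by push_cast; ring
  rw [Matrix.mem_unitaryGroup_iff]
  ext r r'
  rw [Matrix.mul_apply, Matrix.one_apply]
  by_cases hr : (r : ℕ) < N2 <;> by_cases hr' : (r' : ℕ) < N2
  · -- H H
    have key : ∀ c : Fin (2^n), Wker n M h r c * star (Wker n M h) c r' =
        (((h (((c:ℤ) - 2*(((r:ℕ)):ℤ)) % ((2^n : ℕ):ℤ)) *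
           h (((c:ℤ) - 2*(((r':ℕ)):ℤ)) % ((2^n : ℕ):ℤ))) : ℝ) : ℂ) := by
      intro c
      rw [Matrix.star_apply, Wker, Wker]
      simp only [← hN2def, if_pos hr, if_pos hr', Complex.star_def, Complex.conj_ofReal, hcast,
        Complex.ofReal_mul]
    rw [Finset.sum_congr rfl fun c _ => key c, ← Complex.ofReal_sum,
      Fin.sum_univ_eq_sum_range (fun c => ((h (((c:ℤ) - 2*(((r:ℕ)):ℤ)) % ((2^n : ℕ):ℤ)) *
        h (((c:ℤ) - 2*(((r':ℕ)):ℤ)) % ((2^n : ℕ):ℤ))) : ℝ)),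
      dotHH n M K hn hK hM hNM h hsupp hnorm horth N2 hN2 (r:ℕ) (r':ℕ) hr hr']
    by_cases hrr : r = r'
    · rw [if_pos hrr, if_pos (by rw [hrr]), Complex.ofReal_one]
    · rw [if_neg hrr, if_neg (fun hc => hrr (Fin.ext hc)), Complex.ofReal_zero]
  · -- H G
    have key : ∀ c : Fin (2^n), Wker n M h r c * star (Wker n M h) c r' =
        (((h (((c:ℤ) - 2*(((r:ℕ)):ℤ)) % ((2^n : ℕ):ℤ)) *
           gfilter M h (((c:ℤ) - 2*((((r':ℕ) - N2 : ℕ)):ℤ)) % ((2^n : ℕ):ℤ))) : ℝ) : ℂ) := by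
      intro c
      rw [Matrix.star_apply, Wker, Wker]
      simp only [← hN2def, if_pos hr, if_neg hr', Complex.star_def, Complex.conj_ofReal, hcast,
        Complex.ofReal_mul]
    rw [Finset.sum_congr rfl fun c _ => key c, ← Complex.ofReal_sum,
      Fin.sum_univ_eq_sum_range (fun c => ((h (((c:ℤ) - 2*(((r:ℕ)):ℤ)) % ((2^n : ℕ):ℤ)) *
        gfilter M h (((c:ℤ) - 2*((((r':ℕ) - N2 : ℕ)):ℤ)) % ((2^n : ℕ):ℤ))) : ℝ)),
      dotHG n M K hn hK hM hNM h hsupp (r:ℕ) ((r':ℕ) - N2)]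
    rw [if_neg (show ¬ r = r' by intro hc; subst hc; exact hr' hr), Complex.ofReal_zero]
  · -- G H
    have key : ∀ c : Fin (2^n), Wker n M h r c * star (Wker n M h) c r' =
        (((gfilter M h (((c:ℤ) - 2*((((r:ℕ) - N2 : ℕ)):ℤ)) % ((2^n : ℕ):ℤ)) *
           h (((c:ℤ) - 2*(((r':ℕ)):ℤ)) % ((2^n : ℕ):ℤ))) : ℝ) : ℂ) := by
      intro c
      rw [Matrix.star_apply, Wker, Wker]
      simp only [← hN2def, if_neg hr, if_pos hr', Complex.star_def, Complex.conj_ofReal, hcast,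
        Complex.ofReal_mul]
    rw [Finset.sum_congr rfl fun c _ => key c, ← Complex.ofReal_sum,
      Fin.sum_univ_eq_sum_range (fun c => ((gfilter M h (((c:ℤ) - 2*((((r:ℕ) - N2 : ℕ)):ℤ)) % ((2^n : ℕ):ℤ)) *
        h (((c:ℤ) - 2*(((r':ℕ)):ℤ)) % ((2^n : ℕ):ℤ))) : ℝ)),
      dotGH n M K hn hK hM hNM h hsupp ((r:ℕ) - N2) (r':ℕ)]
    rw [if_neg (show ¬ r = r' by intro hc; subst hc; exact hr hr'), Complex.ofReal_zero]
  · -- G G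
    have hi : (r:ℕ) - N2 < N2 := by have := r.isLt; omega
    have hj : (r':ℕ) - N2 < N2 := by have := r'.isLt; omega
    have key : ∀ c : Fin (2^n), Wker n M h r c * star (Wker n M h) c r' =
        (((gfilter M h (((c:ℤ) - 2*((((r:ℕ) - N2 : ℕ)):ℤ)) % ((2^n : ℕ):ℤ)) *
           gfilter M h (((c:ℤ) - 2*((((r':ℕ) - N2 : ℕ)):ℤ)) % ((2^n : ℕ):ℤ))) : ℝ) : ℂ) := by
      intro c
      rw [Matrix.star_apply, Wker, Wker]
      simp only [← hN2def, if_neg hr, if_neg hr', Complex.star_def, Complex.conj_ofReal, hcast,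
        Complex.ofReal_mul]
    rw [Finset.sum_congr rfl fun c _ => key c, ← Complex.ofReal_sum,
      Fin.sum_univ_eq_sum_range (fun c => ((gfilter M h (((c:ℤ) - 2*((((r:ℕ) - N2 : ℕ)):ℤ)) % ((2^n : ℕ):ℤ)) *
        gfilter M h (((c:ℤ) - 2*((((r':ℕ) - N2 : ℕ)):ℤ)) % ((2^n : ℕ):ℤ))) : ℝ)),
      dotGG n M K hn hK hM hNM h hsupp hnorm horth N2 hN2 ((r:ℕ) - N2) ((r':ℕ) - N2) hi hj]
    by_cases hrr : r = r'
    · rw [if_pos (by rw [hrr]), if_pos hrr, Complex.ofReal_one]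
    · have : ¬((r:ℕ) - N2 = (r':ℕ) - N2) := by
        intro hc
        exact hrr (Fin.ext (by omega))
      rw [if_neg this, if_neg hrr, Complex.ofReal_zero]
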